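/- Let α, β ∈ ℝ, a := e^{iα}/√2, b := e^{iβ}/√2, p := (0, a, b, 0), q := (0, a, −b, 0) ∈ ℂ⁴, and ρ := (1/2)·pp* + (1/2)·qq*. Let e₁, e₂, e₃, e₄ be the canonical basis of ℂ⁴. Then the nonselective Lüders operation of each of the two coincidence measurements given by the orthonormal bases {e₁, e₂, e₃, e₄} and {p, e₁, e₄, q} leaves ρ invariant: Σ_{k=1}^{4} (e_k e_k*) ρ (e_k e_k*) = ρ and (pp*)ρ(pp*) + (e₁e₁*)ρ(e₁e₁*) + (e₄e₄*)ρ(e₄e₄*) + (qq*)ρ(qq*) = ρ. Consequently the marginal distribution law is satisfied by all four measurements of the nonlocal box model. -/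

import Mathlib

open scoped InnerProductSpace
open Matrix

noncomputable section

/-- `ℂ²` as a Hilbert space. -/
abbrev C2 : Type := EuclideanSpace ℂ (Fin 2)

/-- `ℂ⁴` as a Hilbert space. -/
abbrev C4 : Type := EuclideanSpace ℂ (Fin 4)

/-- Kronecker product of vectors: `(x ⊗ y)_(2i+j) = xᵢ · yⱼ`. -/
def vKron (x y : C2) : C4 :=
  (WithLp.equiv 2 (Fin 4 → ℂ)).symm fun k =>
    x (⟨k.val / 2, by omega⟩ : Fin 2) * y (⟨k.val % 2, by omega⟩ : Fin 2)

/-- Kronecker product of 2×2 matrices as a 4×4 matrix. -/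
def mKron (M N : Matrix (Fin 2) (Fin 2) ℂ) : Matrix (Fin 4) (Fin 4) ℂ :=
  Matrix.of fun i j =>
    M (⟨i.val / 2, by omega⟩ : Fin 2) (⟨j.val / 2, by omega⟩ : Fin 2) *
      N (⟨i.val % 2, by omega⟩ : Fin 2) (⟨j.val % 2, by omega⟩ : Fin 2)

/-- The rank-one matrix `u · uᴴ` (`uu*`). -/
def rankOne {n : ℕ} (u : EuclideanSpace ℂ (Fin n)) : Matrix (Fin n) (Fin n) ℂ :=
  Matrix.of fun i j => u i * star (u j)

/-- The vector `(a, b, c, d) ∈ ℂ⁴`. -/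
def vec4 (a b c d : ℂ) : C4 :=
  (WithLp.equiv 2 (Fin 4 → ℂ)).symm ![a, b, c, d]

lemma rankOne_vec4 (a b c d : ℂ) : rankOne (vec4 a b c d) =
    !![a*star a, a*star b, a*star c, a*star d;
       b*star a, b*star b, b*star c, b*star d;
       c*star a, c*star b, c*star c, c*star d;
       d*star a, d*star b, d*star c, d*star d] := by
  ext i j
  fin_cases i <;> fin_cases j <;> rfl

lemma exp_ne (γ : ℝ) {a : ℂ} (ha : a = Complex.exp (γ * Complex.I) / Real.sqrt 2) :
    a ≠ 0 := by
  rw [ha]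
  apply div_ne_zero (Complex.exp_ne_zero _)
  simpa using Real.sqrt_ne_zero'.mpr (by norm_num : (0:ℝ) < 2)

lemma conj_mul_self {γ : ℝ} {a : ℂ} (ha : a = Complex.exp (γ * Complex.I) / Real.sqrt 2) :
    (starRingEnd ℂ) a * a = 1/2 := by
  have : (starRingEnd ℂ) a * a = ((‖a‖ ^ 2 : ℝ) : ℂ) := by
    rw [Complex.sq_norm, ← Complex.normSq_eq_conj_mul_self]
  rw [this, ha, norm_div, Complex.norm_exp_ofReal_mul_I, Complex.norm_real, Real.norm_eq_abs,
    abs_of_nonneg (Real.sqrt_nonneg 2), div_pow, one_pow,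
    Real.sq_sqrt (by norm_num : (0:ℝ) ≤ 2)]
  norm_num

set_option maxHeartbeats 4000000 in
/-- In the nonlocal box model with `ρ = ½pp* + ½qq*`, `p = (0,a,b,0)`, `q = (0,a,−b,0)`,
`a = e^{iα}/√2`, `b = e^{iβ}/√2`, the nonselective Lüders operation of each of the two
coincidence measurements given by the orthonormal bases `{e₁,e₂,e₃,e₄}` and `{p,e₁,e₄,q}`
leaves `ρ` invariant: `Σₖ (eₖeₖ*)ρ(eₖeₖ*) = ρ` and
`(pp*)ρ(pp*) + (e₁e₁*)ρ(e₁e₁*) + (e₄e₄*)ρ(e₄e₄*) + (qq*)ρ(qq*) = ρ`; hence the marginal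
distribution law is satisfied by all four measurements of the nonlocal box model. -/
theorem stmt_14 (α β : ℝ) (a b : ℂ)
    (ha : a = Complex.exp (α * Complex.I) / Real.sqrt 2)
    (hb : b = Complex.exp (β * Complex.I) / Real.sqrt 2)
    (p q e1 e2 e3 e4 : C4)
    (hp : p = vec4 0 a b 0) (hq : q = vec4 0 a (-b) 0)
    (he1 : e1 = vec4 1 0 0 0) (he2 : e2 = vec4 0 1 0 0)
    (he3 : e3 = vec4 0 0 1 0) (he4 : e4 = vec4 0 0 0 1)
    (ρ : Matrix (Fin 4) (Fin 4) ℂ)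
    (hρ : ρ = (1 / 2 : ℂ) • rankOne p + (1 / 2 : ℂ) • rankOne q) :
    (rankOne e1 * ρ * rankOne e1 + rankOne e2 * ρ * rankOne e2 +
        rankOne e3 * ρ * rankOne e3 + rankOne e4 * ρ * rankOne e4 = ρ) ∧
      (rankOne p * ρ * rankOne p + rankOne e1 * ρ * rankOne e1 +
        rankOne e4 * ρ * rankOne e4 + rankOne q * ρ * rankOne q = ρ) := by
  have ha2 := conj_mul_self ha
  have hb2 := conj_mul_self hb
  subst hρ hp hq he1 he2 he3 he4
  rw [rankOne_vec4, rankOne_vec4, rankOne_vec4, rankOne_vec4, rankOne_vec4, rankOne_vec4]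
  constructor <;>
  · ext i j
    fin_cases i <;> fin_cases j <;>
      simp [Matrix.mul_apply, Fin.sum_univ_four, Matrix.vecHead, Matrix.vecTail] <;>
      first
        | ring1
        | linear_combination (2*(a*(starRingEnd ℂ) a)*((b*(starRingEnd ℂ) b)+1/2)) * hb2 +
            (2*((a*(starRingEnd ℂ) a)^2 + (a*(starRingEnd ℂ) a)/2 + 1/4) - 1/2) * ha2
        | linear_combination (2*(b*(starRingEnd ℂ) b)*((a*(starRingEnd ℂ) a)+1/2)) * ha2 +
            (2*((b*(starRingEnd ℂ) b)^2 + (b*(starRingEnd ℂ) b)/2 + 1/4) - 1/2) * hb2
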